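/- D_{d,c} is equal to the smallest set V of positive integers satisfying: (i) 1 ∈ V; (ii) if n ∈ V and p is a prime with v_p(W_n) > v_p(n) (where v_p denotes the p-adic valuation), then np ∈ V; and (iii) if n ∈ V and p is a prime with p ∣ W_p and p ∤ n, then np ∈ V. -/

import Mathlib

/-- `W d c n = φ^n(0)` where `φ(x) = x^d + c`. -/
def W (d : ℕ) (c : ℤ) (n : ℕ) : ℤ := (fun x : ℤ => x ^ d + c)^[n] 0

/-- `D_{d,c} = {n : n ≥ 1 and n ∣ W_n}`. -/
def Dset (d : ℕ) (c : ℤ) : Set ℕ := {n | 1 ≤ n ∧ (n : ℤ) ∣ W d c n}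

section lems
variable (d : ℕ) (c : ℤ)

lemma Wkey1 (b : ℕ) (x y : ℤ) :
    (x - y) ∣ ((fun x : ℤ => x ^ d + c)^[b] x - (fun x : ℤ => x ^ d + c)^[b] y) := by
  induction b with
  | zero => simp
  | succ b ih =>
    rw [Function.iterate_succ_apply', Function.iterate_succ_apply']
    simp only [add_sub_add_right_eq_sub]
    exact ih.trans (sub_dvd_pow_sub_pow _ _ d)

lemma W_add_sub (a b : ℕ) : W d c a ∣ (W d c (b + a) - W d c b) := by
  have := Wkey1 d c b (W d c a) 0
  simpa [W, ← Function.iterate_add_apply] using this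

lemma W_dvd_mul (a k : ℕ) : W d c a ∣ W d c (a * k) := by
  induction k with
  | zero => simp [W]
  | succ k ih =>
    have h := W_add_sub d c a (a * k)
    have : W d c (a * k + a) = W d c (a * (k+1)) := by ring_nf
    rw [this] at h
    have := dvd_add h ih
    simpa using this

lemma W_dvd_of_dvd {a n : ℕ} (h : a ∣ n) : W d c a ∣ W d c n := by
  obtain ⟨k, rfl⟩ := h; exact W_dvd_mul d c a k

lemma Wkey2 (hd : 1 ≤ d) {a : ℕ} (ha : 1 ≤ a) (x : ℤ) :
    x ^ d ∣ ((fun x : ℤ => x ^ d + c)^[a] x - (fun x : ℤ => x ^ d + c)^[a] 0) := by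
  obtain ⟨b, rfl⟩ : ∃ b, a = b + 1 := ⟨a - 1, by omega⟩
  rw [Function.iterate_succ_apply, Function.iterate_succ_apply]
  have h := Wkey1 d c b (x ^ d + c) ((0:ℤ) ^ d + c)
  have hz : (0:ℤ) ^ d = 0 := zero_pow (by omega)
  rw [hz, zero_add] at h
  have hx : x ^ d + c - c = x ^ d := by ring
  rw [hx] at h
  convert h using 2 <;> simp [hz]

lemma W_rigid (hd : 2 ≤ d) {p : ℕ} {z e k : ℕ} (hz : 1 ≤ z) (he : 1 ≤ e) (hk : 1 ≤ k)
    (hpe : (p:ℤ) ^ e ∣ W d c z) :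
    (p:ℤ) ^ (e+1) ∣ (W d c (z * k) - W d c z) := by
  induction k with
  | zero => omega
  | succ k ih =>
    rcases Nat.eq_or_lt_of_le hk with h1 | h1
    · simp [← h1]
    · have hk1 : 1 ≤ k := by omega
      have ih := ih hk1
      have hWzk : (p:ℤ) ^ e ∣ W d c (z * k) := by
        have : W d c (z * k) = (W d c (z * k) - W d c z) + W d c z := by ring
        rw [this]
        exact dvd_add ((pow_dvd_pow _ (by omega)).trans ih) hpe
      have hkey : (W d c (z * k)) ^ d ∣ W d c (z * (k+1)) - W d c z := by
        have h2 := Wkey2 d c (by omega) hz (W d c (z * k))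
        have : (fun x : ℤ => x ^ d + c)^[z] (W d c (z * k)) = W d c (z * (k+1)) := by
          rw [W, W, ← Function.iterate_add_apply]
          congr 1; ring
        rw [this] at h2
        simpa [W] using h2
      have : (p:ℤ) ^ (e+1) ∣ (W d c (z * k)) ^ d := by
        calc (p:ℤ) ^ (e+1) ∣ ((p:ℤ) ^ e) ^ d := by
              rw [← pow_mul]; exact pow_dvd_pow _ (by nlinarith)
          _ ∣ (W d c (z * k)) ^ d := pow_dvd_pow_of_dvd hWzk d
      exact dvd_trans this hkey

/-- valuation transfer: if `p ∣ W z` then `p`-divisibility of `W (z*k)` matches that of `W z`. -/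
lemma W_transfer (hd : 2 ≤ d) {p z k : ℕ} (hp : p.Prime) (hz : 1 ≤ z) (hk : 1 ≤ k)
    (hpz : (p:ℤ) ∣ W d c z) (j : ℕ) :
    ((p:ℤ) ^ j ∣ W d c (z * k) ↔ (p:ℤ) ^ j ∣ W d c z) := by
  rcases eq_or_ne (W d c z) 0 with h0 | h0
  · have : W d c (z * k) = 0 := by
      have := W_dvd_mul d c z k; rw [h0] at this; exact zero_dvd_iff.mp this
    simp [this, h0]
  · haveI : Fact p.Prime := ⟨hp⟩
    set e := padicValNat p (W d c z).natAbs with he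
    have hnz : (W d c z).natAbs ≠ 0 := Int.natAbs_ne_zero.mpr h0
    have hpe : (p:ℤ) ^ e ∣ W d c z := by
      have := pow_padicValNat_dvd (p := p) (n := (W d c z).natAbs)
      rw [← Int.natAbs_dvd_natAbs] at *
      simpa [Int.natAbs_pow] using this
    have hpe1 : ¬ (p:ℤ) ^ (e+1) ∣ W d c z := by
      have := pow_succ_padicValNat_not_dvd (p := p) hnz
      intro hcon
      apply this
      rw [← Int.natAbs_dvd_natAbs] at hcon
      simpa [Int.natAbs_pow] using hcon
    have he1 : 1 ≤ e := one_le_padicValNat_of_dvd hnz (by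
      rw [← Int.natAbs_dvd_natAbs] at hpz; simpa using hpz)
    have hrig := W_rigid d c hd hz he1 hk hpe
    constructor
    · intro h
      rcases le_or_gt j e with hje | hje
      · exact (pow_dvd_pow _ hje).trans hpe
      · exfalso
        apply hpe1
        have h1 : (p:ℤ) ^ (e+1) ∣ W d c (z * k) := (pow_dvd_pow _ (by omega)).trans h
        have : W d c z = W d c (z * k) - (W d c (z * k) - W d c z) := by ring
        rw [this]
        exact dvd_sub h1 hrig
    · intro h
      rcases le_or_gt j e with hje | hje
      · refine (pow_dvd_pow _ hje).trans ?_
        have : W d c (z * k) = (W d c (z * k) - W d c z) + W d c z := by ring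
        rw [this]
        exact dvd_add ((pow_dvd_pow _ (by omega)).trans hrig) hpe
      · exact absurd ((pow_dvd_pow _ (by omega)).trans h) hpe1

end lems

section rank
variable (d : ℕ) (c : ℤ)

/-- the predicate for the rank of apparition -/
lemma Wrank_spec {q n : ℕ} (hn : 1 ≤ n) (hqn : (q:ℤ) ∣ W d c n) :
    ∃ z, (1 ≤ z ∧ (q:ℤ) ∣ W d c z) ∧ ∀ k, 1 ≤ k → (q:ℤ) ∣ W d c k → z ≤ k := by
  classical
  have hex : ∃ k, 1 ≤ k ∧ (q:ℤ) ∣ W d c k := ⟨n, hn, hqn⟩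
  refine ⟨Nat.find hex, Nat.find_spec hex, fun k hk1 hk2 => Nat.find_min' hex ⟨hk1, hk2⟩⟩

lemma Wrank_dvd {q z : ℕ} (hz1 : 1 ≤ z) (hqz : (q:ℤ) ∣ W d c z)
    (hmin : ∀ k, 1 ≤ k → (q:ℤ) ∣ W d c k → z ≤ k) :
    ∀ m, 1 ≤ m → (q:ℤ) ∣ W d c m → z ∣ m := by
  intro m
  induction m using Nat.strong_induction_on with
  | _ m ih =>
    intro hm1 hqm
    have hzm : z ≤ m := hmin m hm1 hqm
    rcases Nat.eq_or_lt_of_le hzm with h | h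
    · exact h ▸ dvd_refl z
    · have hsub : (q:ℤ) ∣ W d c (m - z) := by
        have hadd := W_add_sub d c z (m - z)
        have : m - z + z = m := by omega
        rw [this] at hadd
        have h1 : (q:ℤ) ∣ W d c m - W d c (m - z) := hqz.trans hadd
        have : W d c (m - z) = W d c m - (W d c m - W d c (m - z)) := by ring
        rw [this]; exact dvd_sub hqm h1
      have h1 : 1 ≤ m - z := by omega
      have h2 : z ∣ m - z := ih (m - z) (by omega) h1 hsub
      have : m = (m - z) + z := by omega
      rw [this]; exact Nat.dvd_add h2 dvd_rfl

lemma Wrank_le {q z : ℕ} (hq : q.Prime) (hz1 : 1 ≤ z) (hqz : (q:ℤ) ∣ W d c z)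
    (hmin : ∀ k, 1 ≤ k → (q:ℤ) ∣ W d c k → z ≤ k) : z ≤ q := by
  haveI : NeZero q := ⟨hq.pos.ne'⟩
  by_contra hcon
  push_neg at hcon
  -- the map i ↦ W i mod q on Fin z is injective
  have key : ∀ i j : ℕ, i < j → j < z → ¬ ((q:ℤ) ∣ W d c j - W d c i) := by
    intro i j hij hjz hdvd
    rcases Nat.eq_zero_or_pos i with rfl | hi
    · have : (q:ℤ) ∣ W d c j := by simpa [W] using hdvd
      exact absurd (hmin j (by omega) this) (by omega)
    · -- q ∣ W (z - j + i)
      have h1 : (W d c i - W d c j) ∣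
          ((fun x : ℤ => x ^ d + c)^[z - j] (W d c i) - (fun x : ℤ => x ^ d + c)^[z - j] (W d c j)) :=
        Wkey1 d c (z - j) _ _
      have e1 : (fun x : ℤ => x ^ d + c)^[z - j] (W d c i) = W d c (z - j + i) := by
        rw [W, W, ← Function.iterate_add_apply]
      have e2 : (fun x : ℤ => x ^ d + c)^[z - j] (W d c j) = W d c z := by
        rw [W, W, ← Function.iterate_add_apply]
        congr 1; omega
      rw [e1, e2] at h1
      have hq1 : (q:ℤ) ∣ W d c (z - j + i) - W d c z := by
        refine dvd_trans ?_ h1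
        have : W d c i - W d c j = -(W d c j - W d c i) := by ring
        rw [this]; exact dvd_neg.mpr hdvd
      have hq2 : (q:ℤ) ∣ W d c (z - j + i) := by
        have : W d c (z - j + i) = (W d c (z - j + i) - W d c z) + W d c z := by ring
        rw [this]; exact dvd_add hq1 hqz
      have := hmin (z - j + i) (by omega) hq2
      omega
  have hinj : Function.Injective (fun i : Fin z => ((W d c i : ℤ) : ZMod q)) := by
    intro i j hij
    simp only at hij
    by_contra hne
    have hne' : (i : ℕ) ≠ (j : ℕ) := fun h => hne (Fin.ext h)
    rcases Nat.lt_or_ge (i : ℕ) (j : ℕ) with h | h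
    · exact key i j h j.isLt (by
        have : ((W d c j - W d c i : ℤ) : ZMod q) = 0 := by push_cast [hij]; ring
        exact (ZMod.intCast_zmod_eq_zero_iff_dvd _ _).mp this)
    · have h' : (j : ℕ) < (i : ℕ) := by omega
      exact key j i h' i.isLt (by
        have : ((W d c i - W d c j : ℤ) : ZMod q) = 0 := by push_cast [hij]; ring
        exact (ZMod.intCast_zmod_eq_zero_iff_dvd _ _).mp this)
  have := Fintype.card_le_of_injective _ hinj
  simp [ZMod.card] at this
  omega

end rank

section main
variable (d : ℕ) (c : ℤ)

lemma natCast_dvd_W {a : ℕ} {x : ℤ} : (a:ℤ) ∣ x ↔ a ∣ x.natAbs := Int.natCast_dvd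

/-- Dset satisfies the closure conditions. -/
lemma Dset_mem_family (hd : 2 ≤ d) :
    (∀ n ∈ Dset d c, 1 ≤ n) ∧
    1 ∈ Dset d c ∧
    (∀ n ∈ Dset d c, ∀ p : ℕ, p.Prime →
      ((p : ℤ) ^ (padicValNat p n + 1) ∣ W d c n) → n * p ∈ Dset d c) ∧
    (∀ n ∈ Dset d c, ∀ p : ℕ, p.Prime → ((p : ℤ) ∣ W d c p) → ¬ p ∣ n → n * p ∈ Dset d c) := by
  refine ⟨fun n hn => hn.1, ⟨le_refl 1, one_dvd _⟩, ?_, ?_⟩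
  · rintro n ⟨hn1, hnW⟩ p hp hpow
    haveI : Fact p.Prime := ⟨hp⟩
    refine ⟨Nat.one_le_iff_ne_zero.mpr (Nat.mul_ne_zero (by omega) hp.pos.ne'), ?_⟩
    set v := padicValNat p n with hv
    set s := n / p ^ v with hs
    have hn0 : n ≠ 0 := by omega
    have hfv : n.factorization p = v := Nat.factorization_def n hp
    have hps : p ^ v * s = n := by
      have := Nat.ordProj_mul_ordCompl_eq_self n p
      rwa [hfv] at this
    have hnds : ¬ p ∣ s := by
      have := Nat.not_dvd_ordCompl hp hn0
      rwa [hfv] at this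
    -- n * p = p^(v+1) * s
    have hnp : n * p = p ^ (v+1) * s := by rw [← hps]; ring
    rw [natCast_dvd_W]
    have hWdvd : (W d c n).natAbs ∣ (W d c (n * p)).natAbs :=
      Int.natAbs_dvd_natAbs.mpr (W_dvd_of_dvd d c ⟨p, rfl⟩)
    have h1 : p ^ (v+1) ∣ (W d c (n*p)).natAbs := by
      refine dvd_trans ?_ hWdvd
      rw [← natCast_dvd_W]; push_cast; exact hpow
    have h2 : s ∣ (W d c (n*p)).natAbs := by
      refine dvd_trans ?_ (dvd_trans (natCast_dvd_W.mp hnW) hWdvd)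
      exact Dvd.dvd.trans ⟨p ^ v, by rw [← hps]; ring⟩ dvd_rfl
    have hco : Nat.Coprime (p ^ (v+1)) s :=
      Nat.Coprime.pow_left _ ((Nat.Prime.coprime_iff_not_dvd hp).mpr hnds)
    rw [hnp] at h1 h2 ⊢
    exact Nat.Coprime.mul_dvd_of_dvd_of_dvd hco h1 h2
  · rintro n ⟨hn1, hnW⟩ p hp hpW hpn
    refine ⟨Nat.one_le_iff_ne_zero.mpr (Nat.mul_ne_zero (by omega) hp.pos.ne'), ?_⟩
    rw [natCast_dvd_W]
    have h1 : n ∣ (W d c (n*p)).natAbs :=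
      dvd_trans (natCast_dvd_W.mp hnW) (Int.natAbs_dvd_natAbs.mpr (W_dvd_of_dvd d c ⟨p, rfl⟩))
    have h2 : p ∣ (W d c (n*p)).natAbs :=
      dvd_trans (natCast_dvd_W.mp hpW)
        (Int.natAbs_dvd_natAbs.mpr (W_dvd_of_dvd d c ⟨n, mul_comm n p⟩))
    exact Nat.Coprime.mul_dvd_of_dvd_of_dvd
      (((Nat.Prime.coprime_iff_not_dvd hp).mpr hpn).symm) h1 h2

end main

lemma Dset_subset (hd : 2 ≤ d) (V : Set ℕ)
    (h1V : 1 ∈ V)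
    (hii : ∀ n ∈ V, ∀ p : ℕ, p.Prime →
      ((p : ℤ) ^ (padicValNat p n + 1) ∣ W d c n) → n * p ∈ V)
    (hiii : ∀ n ∈ V, ∀ p : ℕ, p.Prime → ((p : ℤ) ∣ W d c p) → ¬ p ∣ n → n * p ∈ V) :
    Dset d c ⊆ V := by
  intro n
  induction n using Nat.strong_induction_on with
  | _ n ih =>
    rintro ⟨hn1, hnW⟩
    rcases eq_or_lt_of_le hn1 with h | hn2
    · exact (h ▸ h1V : n ∈ V)
    -- n > 1
    have hn0 : n ≠ 0 := by omega
    have hne : n.primeFactors.Nonempty := Nat.nonempty_primeFactors.mpr hn2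
    set p := n.primeFactors.max' hne with hpdef
    have hpmem := n.primeFactors.max'_mem hne
    have hp : p.Prime := Nat.prime_of_mem_primeFactors hpmem
    have hpn : p ∣ n := Nat.dvd_of_mem_primeFactors hpmem
    have hmax : ∀ q ∈ n.primeFactors, q ≤ p := fun q hq => n.primeFactors.le_max' q hq
    set m := n / p with hmdef
    have hmp : m * p = n := Nat.div_mul_cancel hpn
    have hm1 : 1 ≤ m := Nat.one_le_div_iff hp.pos |>.mpr (Nat.le_of_dvd (by omega) hpn)
    have hmlt : m < n := Nat.div_lt_self (by omega) hp.one_lt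
    have hmn : m ∣ n := ⟨p, hmp.symm⟩
    -- ranks
    -- for every prime q dividing n, we get a rank z with z ∣ n
    have hrank : ∀ q : ℕ, q.Prime → q ∣ n →
        ∃ z, (1 ≤ z ∧ (q:ℤ) ∣ W d c z) ∧ z ∣ n ∧ z ≤ q ∧
          (∀ k, 1 ≤ k → (q:ℤ) ∣ W d c k → z ∣ k) := by
      intro q hq hqn
      have hqWn : (q:ℤ) ∣ W d c n := dvd_trans (by exact_mod_cast Int.natCast_dvd_natCast.mpr hqn) hnW
      obtain ⟨z, ⟨hz1, hzW⟩, hzmin⟩ := Wrank_spec d c hn1 hqWn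
      have hdvd := Wrank_dvd d c hz1 hzW hzmin
      exact ⟨z, ⟨hz1, hzW⟩, hdvd n hn1 hqWn, Wrank_le d c hq hz1 hzW hzmin, hdvd⟩
    -- key transfer: if z ∣ m (and z ∣ n) with q ∣ W z then prime power divisibility transfers
    have htrans : ∀ q z j : ℕ, q.Prime → 1 ≤ z → (q:ℤ) ∣ W d c z → z ∣ m →
        (q:ℤ)^j ∣ W d c n → (q:ℤ)^j ∣ W d c m := by
      intro q z j hq hz1 hzW hzm0 hWn
      have hzn : z ∣ n := hzm0.trans hmn
      obtain ⟨k, hk⟩ := hzm0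
      obtain ⟨k', hk'⟩ := hzn
      have hk1 : 1 ≤ k := Nat.pos_of_ne_zero (by rintro rfl; omega)
      have hk'1 : 1 ≤ k' := Nat.pos_of_ne_zero (by rintro rfl; omega)
      rw [hk'] at hWn
      rw [hk]
      exact (W_transfer d c hd hq hz1 hk1 hzW j).mpr ((W_transfer d c hd hq hz1 hk'1 hzW j).mp hWn)
    -- every prime q dividing m has its rank dividing m
    have hzm : ∀ q : ℕ, q.Prime → q ∣ m →
        ∃ z, 1 ≤ z ∧ (q:ℤ) ∣ W d c z ∧ z ∣ m := by
      intro q hq hqm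
      obtain ⟨z, ⟨hz1, hzW⟩, hzn, hzq, _⟩ := hrank q hq (hqm.trans hmn)
      rcases eq_or_lt_of_le (hmax q (Nat.mem_primeFactors.mpr ⟨hq, hqm.trans hmn, hn0⟩)) with hqp | hqp
      · -- q = p : then z ≤ p; if z = p then z = q ∣ m; else z < p so p ∤ z
        rcases eq_or_lt_of_le hzq with hzq' | hzq'
        · exact ⟨z, hz1, hzW, by rw [hzq', hqp]; rwa [← hqp]⟩
        · have hpz : ¬ p ∣ z := fun h => by have := Nat.le_of_dvd (by omega) h; omega
          have : z ∣ m := (Nat.Coprime.dvd_of_dvd_mul_right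
            (Nat.Coprime.symm ((Nat.Prime.coprime_iff_not_dvd hp).mpr hpz)) (hmp ▸ hzn))
          exact ⟨z, hz1, hzW, this⟩
      · -- q < p, z ≤ q < p
        have hpz : ¬ p ∣ z := fun h => by have := Nat.le_of_dvd (by omega) h; omega
        have : z ∣ m := (Nat.Coprime.dvd_of_dvd_mul_right
          (Nat.Coprime.symm ((Nat.Prime.coprime_iff_not_dvd hp).mpr hpz)) (hmp ▸ hzn))
        exact ⟨z, hz1, hzW, this⟩
    -- m ∈ Dset
    have hmD : (m:ℤ) ∣ W d c m := by
      rw [natCast_dvd_W]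
      rw [Nat.dvd_iff_prime_pow_dvd_dvd]
      intro q k hq hqk
      rcases Nat.eq_zero_or_pos k with rfl | hk1
      · simp
      have hqm : q ∣ m := dvd_trans (dvd_pow_self q (by omega)) hqk
      obtain ⟨z, hz1, hzW, hzm'⟩ := hzm q hq hqm
      have hWn' : (q:ℤ)^k ∣ W d c n := by
        have : (q:ℕ)^k ∣ n := hqk.trans hmn
        exact dvd_trans (by exact_mod_cast Int.natCast_dvd_natCast.mpr this) hnW
      have h5 := htrans q z k hq hz1 hzW hzm' hWn'
      rw [show ((q:ℤ))^k = ((q^k : ℕ):ℤ) by push_cast; ring] at h5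
      exact natCast_dvd_W.mp h5
    have hmV : m ∈ V := ih m hmlt ⟨hm1, hmD⟩
    -- edge from m to n
    obtain ⟨z, ⟨hz1, hzW⟩, hzn, hzp, hzdvd⟩ := hrank p hp hpn
    by_cases hzmm : z ∣ m
    · -- edge (ii)
      haveI : Fact p.Prime := ⟨hp⟩
      have hvm : padicValNat p n = padicValNat p m + 1 := by
        rw [← hmp, padicValNat.mul (by omega) hp.pos.ne', padicValNat_self]
      have hWn' : (p:ℤ)^(padicValNat p n) ∣ W d c n := by
        have h1 : p ^ (padicValNat p n) ∣ n := pow_padicValNat_dvd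
        exact dvd_trans (by exact_mod_cast Int.natCast_dvd_natCast.mpr h1) hnW
      have := htrans p z (padicValNat p n) hp hz1 hzW hzmm hWn'
      rw [hvm] at this
      have := hii m hmV p hp this
      rwa [hmp] at this
    · -- z = p and p ∤ m : edge (iii)
      have hzeq : z = p := by
        rcases eq_or_lt_of_le hzp with h | h
        · exact h
        · exfalso
          apply hzmm
          have hpz : ¬ p ∣ z := fun hh => by have := Nat.le_of_dvd (by omega) hh; omega
          exact Nat.Coprime.dvd_of_dvd_mul_right
            (Nat.Coprime.symm ((Nat.Prime.coprime_iff_not_dvd hp).mpr hpz)) (hmp ▸ hzn)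
      have hpm : ¬ p ∣ m := fun h => hzmm (hzeq ▸ h)
      have hpWp : (p:ℤ) ∣ W d c p := hzeq ▸ hzW
      have := hiii m hmV p hp hpWp hpm
      rwa [hmp] at this

/-- `D_{d,c}` is the smallest set `V` of positive integers such that `1 ∈ V`, and
`V` is closed under adjoining `n*p` whenever `n ∈ V` and either `p` is a prime with
`v_p(W_n) > v_p(n)` (expressed as `p^(v_p(n)+1) ∣ W_n`, which also covers `W_n = 0`),
or `p` is a prime with `p ∣ W_p` and `p ∤ n`. -/
theorem Dset_eq_graph_vertices (d : ℕ) (hd : 2 ≤ d) (c : ℤ) :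
    Dset d c =
    ⋂₀ {V : Set ℕ |
        (∀ n ∈ V, 1 ≤ n) ∧
        1 ∈ V ∧
        (∀ n ∈ V, ∀ p : ℕ, p.Prime →
          ((p : ℤ) ^ (padicValNat p n + 1) ∣ W d c n) → n * p ∈ V) ∧
        (∀ n ∈ V, ∀ p : ℕ, p.Prime → ((p : ℤ) ∣ W d c p) → ¬ p ∣ n → n * p ∈ V)} := by
  apply Set.eq_of_subset_of_subset
  · intro n hn
    rintro V ⟨_, h1V, hii, hiii⟩
    exact Dset_subset (d := d) (c := c) hd V h1V hii hiii hn
  · intro n hn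
    exact hn (Dset d c) (Dset_mem_family (d := d) (c := c) hd)
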